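/- Let K be a bounded operator on H₁ and L a bounded operator on H₂, and let {xₙ ⊕ yₙ}ₙ≥1 be a K ⊕ L-frame for H₁ ⊕ H₂. Then: (i) if {xₙ}ₙ≥1 is a K-minimal frame for H₁, then L = 0; (ii) if {yₙ}ₙ≥1 is an L-minimal frame for H₂, then K = 0; (iii) if both are minimal, then K = 0 and L = 0. -/

import Mathlib

noncomputable section

open scoped ENNReal

/-- The sequence of direct sums `xₙ ⊕ yₙ` in the super Hilbert space `H₁ ⊕ H₂`,
realized as `WithLp 2 (H₁ × H₂)`. -/
def pairSeq {H₁ H₂ : Type*} [NormedAddCommGroup H₁] [NormedAddCommGroup H₂]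
    (x : ℕ → H₁) (y : ℕ → H₂) : ℕ → WithLp 2 (H₁ × H₂) :=
  fun n => (WithLp.equiv 2 (H₁ × H₂)).symm (x n, y n)

/-- A sequence `{xₙ}` is a Bessel sequence: there is `B > 0` with
`∑ₙ |⟨v, xₙ⟩|² ≤ B‖v‖²` for all `v` (in particular the series converges). -/
def IsBessel {H : Type*} [NormedAddCommGroup H] [InnerProductSpace ℂ H] (x : ℕ → H) : Prop :=
  ∃ B : ℝ, 0 < B ∧ ∀ v : H, Summable (fun n => ‖(inner ℂ v (x n) : ℂ)‖ ^ 2) ∧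
    ∑' n, ‖(inner ℂ v (x n) : ℂ)‖ ^ 2 ≤ B * ‖v‖ ^ 2

/-- A sequence `{xₙ}` is a `K`-frame: there are `A, B > 0` with
`A‖K*v‖² ≤ ∑ₙ |⟨v, xₙ⟩|² ≤ B‖v‖²` for all `v`. -/
def IsKFrame {H : Type*} [NormedAddCommGroup H] [InnerProductSpace ℂ H] [CompleteSpace H]
    (K : H →L[ℂ] H) (x : ℕ → H) : Prop :=
  ∃ A B : ℝ, 0 < A ∧ 0 < B ∧ ∀ v : H, Summable (fun n => ‖(inner ℂ v (x n) : ℂ)‖ ^ 2) ∧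
    A * ‖K.adjoint v‖ ^ 2 ≤ ∑' n, ‖(inner ℂ v (x n) : ℂ)‖ ^ 2 ∧
    ∑' n, ‖(inner ℂ v (x n) : ℂ)‖ ^ 2 ≤ B * ‖v‖ ^ 2

/-- The operator `K ⊕ L` on the super Hilbert space `H₁ ⊕ H₂`,
`(K ⊕ L)(x ⊕ y) = Kx ⊕ Ly`. -/
def dsum {H₁ H₂ : Type*}
    [NormedAddCommGroup H₁] [InnerProductSpace ℂ H₁]
    [NormedAddCommGroup H₂] [InnerProductSpace ℂ H₂]
    (K : H₁ →L[ℂ] H₁) (L : H₂ →L[ℂ] H₂) :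
    WithLp 2 (H₁ × H₂) →L[ℂ] WithLp 2 (H₁ × H₂) :=
  ((WithLp.prodContinuousLinearEquiv 2 ℂ H₁ H₂).symm : (H₁ × H₂) →L[ℂ] WithLp 2 (H₁ × H₂)) ∘L
    (K.prodMap L) ∘L
    ((WithLp.prodContinuousLinearEquiv 2 ℂ H₁ H₂) : WithLp 2 (H₁ × H₂) →L[ℂ] (H₁ × H₂))

/-- Auxiliary: adjoint of `dsum`. -/
lemma dsum_adjoint {H₁ H₂ : Type*}
    [NormedAddCommGroup H₁] [InnerProductSpace ℂ H₁] [CompleteSpace H₁]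
    [NormedAddCommGroup H₂] [InnerProductSpace ℂ H₂] [CompleteSpace H₂]
    (K : H₁ →L[ℂ] H₁) (L : H₂ →L[ℂ] H₂) :
    ContinuousLinearMap.adjoint (dsum K L) = dsum K.adjoint L.adjoint := by
  refine ((ContinuousLinearMap.eq_adjoint_iff _ _).mpr ?_).symm
  intro a b
  show (inner ℂ ((dsum K.adjoint L.adjoint) a) b : ℂ) = inner ℂ a (dsum K L b)
  rw [WithLp.prod_inner_apply, WithLp.prod_inner_apply]
  show (inner ℂ (K.adjoint a.fst) b.fst : ℂ) + inner ℂ (L.adjoint a.snd) b.snd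
      = inner ℂ a.fst (K b.fst) + inner ℂ a.snd (L b.snd)
  rw [ContinuousLinearMap.adjoint_inner_left, ContinuousLinearMap.adjoint_inner_left]

/-- Auxiliary: for `f ∈ ℓ²`, `‖f‖² = ∑ₙ ‖f n‖²`. -/
lemma lp_norm_sq (f : lp (fun _ : ℕ => ℂ) 2) : ‖f‖ ^ 2 = ∑' n, ‖f n‖ ^ 2 := by
  have h := lp.norm_rpow_eq_tsum (p := 2) (by norm_num) f
  simp only [ENNReal.toReal_ofNat] at h
  calc ‖f‖ ^ 2 = ‖f‖ ^ (2:ℝ) := by rw [Real.rpow_two]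
  _ = ∑' n, ‖f n‖ ^ (2:ℝ) := h
  _ = ∑' n, ‖f n‖ ^ 2 := by simp [Real.rpow_two]

/-- Auxiliary: coordinates of the adjoint of a synthesis operator. -/
lemma adjoint_coord {H : Type*} [NormedAddCommGroup H] [InnerProductSpace ℂ H] [CompleteSpace H]
    (T : lp (fun _ : ℕ => ℂ) 2 →L[ℂ] H) (x : ℕ → H)
    (hT : ∀ a : lp (fun _ : ℕ => ℂ) 2, HasSum (fun n => a n • x n) (T a))
    (u : H) (n : ℕ) : (T.adjoint u) n = inner ℂ (x n) u := by
  set e : lp (fun _ : ℕ => ℂ) 2 := lp.single 2 n (1:ℂ) with he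
  have h1 : T e = x n := by
    have h2 : HasSum (fun m => e m • x m) (x n) := by
      have : (fun m => e m • x m) = fun m => if m = n then x n else 0 := by
        funext m
        by_cases hm : m = n
        · subst hm; simp [he, lp.single_apply_self]
        · simp [he, lp.single_apply_ne _ _ _ hm, hm]
      rw [this]
      exact hasSum_ite_eq n (x n)
    exact (hT _).unique h2
  have h3 : (T.adjoint u) n = inner ℂ e (T.adjoint u) := by
    rw [lp.inner_eq_tsum]
    rw [tsum_eq_single n]
    · simp [he, lp.single_apply_self]
    · intro m hm; simp [he, lp.single_apply_ne _ _ _ hm, Pi.single_apply, hm]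
  rw [h3, ContinuousLinearMap.adjoint_inner_right, h1]

/-- Auxiliary: an injective continuous linear map between Hilbert spaces has an adjoint
with dense range. -/
lemma denseRange_adjoint {E F : Type*} [NormedAddCommGroup E] [InnerProductSpace ℂ E]
    [CompleteSpace E] [NormedAddCommGroup F] [InnerProductSpace ℂ F] [CompleteSpace F]
    (T : E →L[ℂ] F) (inj : Function.Injective T) :
    DenseRange (ContinuousLinearMap.adjoint T) := by
  have h : (LinearMap.range
      ((ContinuousLinearMap.adjoint T : F →L[ℂ] E) : F →ₗ[ℂ] E)).topologicalClosure = ⊤ := by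
    rw [Submodule.topologicalClosure_eq_top_iff]
    rw [Submodule.eq_bot_iff]
    intro a ha
    rw [Submodule.mem_orthogonal] at ha
    have h2 : T a = 0 := by
      apply ext_inner_left ℂ
      intro u
      rw [inner_zero_right, ← ContinuousLinearMap.adjoint_inner_left]
      exact ha _ (LinearMap.mem_range_self _ u)
    exact inj (h2.trans (map_zero T).symm)
  have hd : Dense ((LinearMap.range
      ((ContinuousLinearMap.adjoint T : F →L[ℂ] E) : F →ₗ[ℂ] E) : Submodule ℂ E) : Set E) := by
    rw [dense_iff_closure_eq, ← Submodule.topologicalClosure_coe, h]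
    rfl
  simpa [LinearMap.coe_range, DenseRange] using hd

/-- Auxiliary: abstract vanishing lemma. -/
lemma core_zero {E F G F' : Type*} [NormedAddCommGroup E] [NormedAddCommGroup G]
    [NormedAddCommGroup F']
    {A : ℝ} (hA : 0 < A) (P : E → G) (Q : F → G) (R : F → F')
    (hd : DenseRange P)
    (hineq : ∀ u v, A * ‖R v‖ ^ 2 ≤ ‖P u + Q v‖ ^ 2) :
    ∀ v, R v = 0 := by
  intro v
  have key : ∀ ε : ℝ, 0 < ε → A * ‖R v‖ ^ 2 ≤ 0 + ε := by
    intro ε hε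
    obtain ⟨u, hu⟩ := hd.exists_dist_lt (-(Q v)) (Real.sqrt_pos.mpr hε)
    rw [dist_eq_norm] at hu
    have h1 : ‖P u + Q v‖ < Real.sqrt ε := by
      calc ‖P u + Q v‖ = ‖-(Q v) - P u‖ := by
            rw [← norm_neg (P u + Q v)]; congr 1; abel
        _ < Real.sqrt ε := hu
    have h2 : ‖P u + Q v‖ ^ 2 < ε := by
      calc ‖P u + Q v‖ ^ 2 < Real.sqrt ε ^ 2 :=
            pow_lt_pow_left₀ h1 (norm_nonneg _) (by norm_num)
        _ = ε := Real.sq_sqrt hε.le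
    linarith [hineq u v]
  have h0 : A * ‖R v‖ ^ 2 ≤ 0 := le_of_forall_pos_le_add key
  have h2 : ‖R v‖ ^ 2 ≤ 0 := by
    by_contra hpos
    push_neg at hpos
    nlinarith
  have h3 : ‖R v‖ ^ 2 = 0 := le_antisymm h2 (sq_nonneg _)
  have h4 : ‖R v‖ = 0 := by
    have := pow_eq_zero_iff (n := 2) (by norm_num) |>.mp h3
    exact this
  exact norm_eq_zero.mp h4

variable {H₁ H₂ : Type*}
  [NormedAddCommGroup H₁] [InnerProductSpace ℂ H₁] [CompleteSpace H₁]
  [TopologicalSpace.SeparableSpace H₁]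
  [NormedAddCommGroup H₂] [InnerProductSpace ℂ H₂] [CompleteSpace H₂]
  [TopologicalSpace.SeparableSpace H₂]

set_option maxHeartbeats 1000000

/-- let `{xₙ ⊕ yₙ}` be a `K ⊕ L`-frame for `H₁ ⊕ H₂`, with `T₁, T₂` the synthesis
operators of `{xₙ}, {yₙ}`. Then (i) if `{xₙ}` is a `K`-minimal frame then `L = 0`; (ii) if
`{yₙ}` is an `L`-minimal frame then `K = 0`; (iii) if both are minimal then `K = 0 ∧ L = 0`. -/
theorem zero_of_minimal_pair_kframe (K : H₁ →L[ℂ] H₁) (L : H₂ →L[ℂ] H₂)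
    (x : ℕ → H₁) (y : ℕ → H₂)
    (h : IsKFrame (dsum K L) (pairSeq x y))
    (T₁ : lp (fun _ : ℕ => ℂ) 2 →L[ℂ] H₁)
    (hT₁ : ∀ a : lp (fun _ : ℕ => ℂ) 2, HasSum (fun n => a n • x n) (T₁ a))
    (T₂ : lp (fun _ : ℕ => ℂ) 2 →L[ℂ] H₂)
    (hT₂ : ∀ a : lp (fun _ : ℕ => ℂ) 2, HasSum (fun n => a n • y n) (T₂ a)) :
    ((IsKFrame K x ∧ Function.Injective T₁) → L = 0) ∧
    ((IsKFrame L y ∧ Function.Injective T₂) → K = 0) ∧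
    (((IsKFrame K x ∧ Function.Injective T₁) ∧ (IsKFrame L y ∧ Function.Injective T₂)) →
      K = 0 ∧ L = 0) := by
  obtain ⟨A, B, hA, hB, hfr⟩ := h
  -- the key inequality
  have key : ∀ (u : H₁) (v : H₂),
      A * (‖K.adjoint u‖ ^ 2 + ‖L.adjoint v‖ ^ 2)
        ≤ ‖T₁.adjoint u + T₂.adjoint v‖ ^ 2 := by
    intro u v
    set w : WithLp 2 (H₁ × H₂) := (WithLp.equiv 2 (H₁ × H₂)).symm (u, v) with hw
    obtain ⟨hsum, hlow, hup⟩ := hfr w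
    have hnorm : ‖ContinuousLinearMap.adjoint (dsum K L) w‖ ^ 2
        = ‖K.adjoint u‖ ^ 2 + ‖L.adjoint v‖ ^ 2 := by
      rw [dsum_adjoint, WithLp.prod_norm_sq_eq_of_L2]
      rfl
    have htsum : ∑' n, ‖(inner ℂ w (pairSeq x y n) : ℂ)‖ ^ 2
        = ‖T₁.adjoint u + T₂.adjoint v‖ ^ 2 := by
      rw [lp_norm_sq]
      apply tsum_congr
      intro n
      have h1 : (T₁.adjoint u + T₂.adjoint v) n
          = (inner ℂ (x n) u : ℂ) + inner ℂ (y n) v := by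
        simp [lp.coeFn_add, adjoint_coord T₁ x hT₁, adjoint_coord T₂ y hT₂]
      have h2 : (inner ℂ w (pairSeq x y n) : ℂ) = inner ℂ u (x n) + inner ℂ v (y n) := by
        rw [WithLp.prod_inner_apply]; rfl
      rw [h1, h2]
      have h3 : ((inner ℂ (x n) u : ℂ) + inner ℂ (y n) v)
          = (starRingEnd ℂ) ((inner ℂ u (x n) : ℂ) + inner ℂ v (y n)) := by
        simp [inner_conj_symm]
      rw [h3, RCLike.norm_conj]
    calc A * (‖K.adjoint u‖ ^ 2 + ‖L.adjoint v‖ ^ 2)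
        = A * ‖ContinuousLinearMap.adjoint (dsum K L) w‖ ^ 2 := by rw [hnorm]
      _ ≤ ∑' n, ‖(inner ℂ w (pairSeq x y n) : ℂ)‖ ^ 2 := hlow
      _ = ‖T₁.adjoint u + T₂.adjoint v‖ ^ 2 := htsum
  have part1 : Function.Injective T₁ → L = 0 := by
    intro inj
    have hz : ∀ v, L.adjoint v = 0 := by
      refine core_zero hA T₁.adjoint T₂.adjoint L.adjoint (denseRange_adjoint T₁ inj) ?_
      intro u v
      refine le_trans ?_ (key u v)
      have := sq_nonneg ‖K.adjoint u‖
      nlinarith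
    have hadj : ContinuousLinearMap.adjoint L = 0 := ContinuousLinearMap.ext hz
    calc L = ContinuousLinearMap.adjoint (ContinuousLinearMap.adjoint L) :=
          (ContinuousLinearMap.adjoint_adjoint L).symm
      _ = 0 := by rw [hadj]; exact map_zero _
  have part2 : Function.Injective T₂ → K = 0 := by
    intro inj
    have hz : ∀ u, K.adjoint u = 0 := by
      refine core_zero hA T₂.adjoint T₁.adjoint K.adjoint (denseRange_adjoint T₂ inj) ?_
      intro v u
      rw [add_comm]
      refine le_trans ?_ (key u v)
      have := sq_nonneg ‖L.adjoint v‖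
      nlinarith
    have hadj : ContinuousLinearMap.adjoint K = 0 := ContinuousLinearMap.ext hz
    calc K = ContinuousLinearMap.adjoint (ContinuousLinearMap.adjoint K) :=
          (ContinuousLinearMap.adjoint_adjoint K).symm
      _ = 0 := by rw [hadj]; exact map_zero _
  exact ⟨fun hp => part1 hp.2, fun hp => part2 hp.2,
    fun hp => ⟨part2 hp.2.2, part1 hp.1.2⟩⟩
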